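/- For c∈ℝ, one has P_X=δ_c (the Dirac mass at c) if and only if every φ∈S fixes c, i.e. if and only if b(ω)+r(ω)c=c for P-almost every ω. -/

import Mathlib

open MeasureTheory Filter Topology

private lemma telescope_sum {Ω : Type*} (T : Ω → Ω) (b r : Ω → ℝ) (c : ℝ) (ω : Ω)
    (h : ∀ n : ℕ, b (T^[n] ω) + r (T^[n] ω) * c = c) (N : ℕ) :
    ∑ n ∈ Finset.range N, (∏ k ∈ Finset.range n, r (T^[k] ω)) * b (T^[n] ω)
      = c - c * ∏ k ∈ Finset.range N, r (T^[k] ω) := by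
  induction N with
  | zero => simp
  | succ N ih =>
      rw [Finset.sum_range_succ, Finset.prod_range_succ, ih]
      have hb : b (T^[N] ω) = c - r (T^[N] ω) * c := by linarith [h N]
      rw [hb]; ring

/-- The law `P_X` is the Dirac mass at `c` if and only if every affine map `φ_ω` fixes `c`,
i.e. if and only if `b(ω) + r(ω)·c = c` for `P`-almost every `ω`. -/
theorem law_eq_dirac_iff_fixed
    {Ω : Type*} [MeasurableSpace Ω] (P : Measure Ω) [IsProbabilityMeasure P]
    (T : Ω → Ω) (hT : Ergodic T P)
    (b r : Ω → ℝ) (hb : Measurable b) (hr : Measurable r)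
    (hrpos : ∀ ω, 0 < r ω)
    (hbInt : Integrable b P)
    (hlogInt : Integrable (fun ω => Real.log (r ω)) P)
    (hlogNeg : ∫ ω, Real.log (r ω) ∂P < 0)
    (hScount : Set.Countable {p : ℝ × ℝ | ∃ ω, (b ω, r ω) = p})
    (hSpos : ∀ p ∈ {p : ℝ × ℝ | ∃ ω, (b ω, r ω) = p}, 0 < P {ω | (b ω, r ω) = p})
    (X : Ω → ℝ) (hX : Measurable X)
    (hXsum : ∀ᵐ ω ∂P,
      HasSum (fun n : ℕ => (∏ k ∈ Finset.range n, r (T^[k] ω)) * b (T^[n] ω)) (X ω))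
    (c : ℝ) :
    P.map X = Measure.dirac c ↔ (∀ᵐ ω ∂P, b ω + r ω * c = c) := by
  have hmp : MeasurePreserving T P P := hT.toMeasurePreserving
  have hTmeas : Measurable T := hmp.measurable
  constructor
  · -- forward direction
    intro hmap
    have hXc : ∀ᵐ ω ∂P, X ω = c := by
      have h0 : P.map X ({c}ᶜ) = 0 := by
        rw [hmap, Measure.dirac_apply' _ (measurableSet_singleton c).compl]
        simp
      rw [Measure.map_apply hX (measurableSet_singleton c).compl] at h0
      have hset : {a | ¬ X a = c} = X ⁻¹' {c}ᶜ := by ext a; simp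
      rw [ae_iff, hset]
      exact h0
    have hXT : ∀ᵐ ω ∂P, HasSum
        (fun n : ℕ => (∏ k ∈ Finset.range n, r (T^[k] (T ω))) * b (T^[n] (T ω))) (X (T ω)) :=
      hmp.quasiMeasurePreserving.ae hXsum
    have hXcT : ∀ᵐ ω ∂P, X (T ω) = c := hmp.quasiMeasurePreserving.ae hXc
    filter_upwards [hXsum, hXT, hXc, hXcT] with ω h1 h2 h3 h4
    have h5 : HasSum (fun n : ℕ =>
        r ω * ((∏ k ∈ Finset.range n, r (T^[k] (T ω))) * b (T^[n] (T ω))))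
        (r ω * X (T ω)) := h2.mul_left (r ω)
    have key : (fun n : ℕ =>
        r ω * ((∏ k ∈ Finset.range n, r (T^[k] (T ω))) * b (T^[n] (T ω))))
        = fun n : ℕ => (∏ k ∈ Finset.range (n + 1), r (T^[k] ω)) * b (T^[n + 1] ω) := by
      funext n
      rw [Finset.prod_range_succ']
      simp only [Function.iterate_succ_apply, Function.iterate_zero_apply]
      ring
    rw [key] at h5
    have h6 := (hasSum_nat_add_iff (f := fun n : ℕ =>
        (∏ k ∈ Finset.range n, r (T^[k] ω)) * b (T^[n] ω)) 1).mp h5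
    simp only [Finset.sum_range_one, Finset.prod_range_zero, Function.iterate_zero_apply,
      one_mul] at h6
    have := h1.unique h6
    rw [h3, h4] at this
    linarith
  · -- reverse direction
    intro hfix
    suffices hXc : ∀ᵐ ω ∂P, X ω = c by
      calc P.map X = P.map (fun _ => c) := Measure.map_congr hXc
        _ = Measure.dirac c := by simp [Measure.map_const]
    have hfixIter : ∀ᵐ ω ∂P, ∀ n : ℕ, b (T^[n] ω) + r (T^[n] ω) * c = c := by
      rw [MeasureTheory.ae_all_iff]
      intro n
      exact (hmp.iterate n).quasiMeasurePreserving.ae hfix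
    -- a set of definite log-decrease
    have hneg : ∃ ε : ℝ, 0 < ε ∧ 0 < P {ω | Real.log (r ω) ≤ -ε} := by
      by_contra hcon
      push_neg at hcon
      have hzero : ∀ n : ℕ, P {ω | Real.log (r ω) ≤ -(1 / (n + 1 : ℝ))} = 0 := by
        intro n
        have h1 : (0:ℝ) < 1 / (n + 1 : ℝ) := by positivity
        exact le_antisymm (hcon _ h1) (by simp)
      have hae : ∀ᵐ ω ∂P, ∀ n : ℕ, ¬ (Real.log (r ω) ≤ -(1 / (n + 1 : ℝ))) := by
        rw [MeasureTheory.ae_all_iff]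
        intro n
        rw [ae_iff]
        simpa using hzero n
      have hnonneg : ∀ᵐ ω ∂P, 0 ≤ Real.log (r ω) := by
        filter_upwards [hae] with ω hω
        by_contra hlt
        push_neg at hlt
        obtain ⟨n, hn⟩ := exists_nat_one_div_lt (by linarith : (0:ℝ) < -Real.log (r ω))
        exact hω n (by linarith)
      have : 0 ≤ ∫ ω, Real.log (r ω) ∂P := integral_nonneg_of_ae hnonneg
      linarith
    obtain ⟨ε, hε, hsPos⟩ := hneg
    set s : Set Ω := {ω | Real.log (r ω) ≤ -ε} with hs_def
    have hsMeas : MeasurableSet s := measurableSet_le (hr.log) measurable_const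
    -- the set of points visiting s infinitely often
    set E : Set Ω := ⋂ N : ℕ, ⋃ n : ℕ, ⋃ _ : N ≤ n, T^[n] ⁻¹' s with hE_def
    have hEmem : ∀ ω, ω ∈ E ↔ ∃ᶠ n in atTop, T^[n] ω ∈ s := by
      intro ω
      simp [hE_def, frequently_atTop, Set.mem_iInter, Set.mem_iUnion]
    have hEmeas : MeasurableSet E := by
      refine MeasurableSet.iInter fun N => MeasurableSet.iUnion fun n =>
        MeasurableSet.iUnion fun _ => ?_
      exact (hTmeas.iterate n) hsMeas
    have hEinv : T ⁻¹' E = E := by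
      ext ω
      simp only [Set.mem_preimage, hEmem]
      constructor
      · intro h
        rw [frequently_atTop] at h ⊢
        intro N
        obtain ⟨n, hn, hns⟩ := h N
        exact ⟨n + 1, by omega, by rwa [Function.iterate_succ_apply]⟩
      · intro h
        rw [frequently_atTop] at h ⊢
        intro N
        obtain ⟨n, hn, hns⟩ := h (N + 1)
        obtain ⟨m, rfl⟩ : ∃ m, n = m + 1 := ⟨n - 1, by omega⟩
        exact ⟨m, by omega, by rwa [Function.iterate_succ_apply] at hns⟩
    have hE1 : P E = 1 := by
      rcases hT.toPreErgodic.prob_eq_zero_or_one hEmeas hEinv with h0 | h1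
      · exfalso
        have hvisit : ∀ᵐ ω ∂P, ω ∈ s → ∃ᶠ n in atTop, T^[n] ω ∈ s :=
          hmp.conservative.ae_mem_imp_frequently_image_mem hsMeas.nullMeasurableSet
        have hnE : ∀ᵐ ω ∂P, ω ∉ E := by
          rw [ae_iff]; simpa using h0
        have : ∀ᵐ ω ∂P, ω ∉ s := by
          filter_upwards [hvisit, hnE] with ω h1 h2
          intro hωs
          exact h2 ((hEmem ω).mpr (h1 hωs))
        exact absurd (measure_eq_zero_iff_ae_notMem.mpr this) hsPos.ne'
      · exact h1
    have hEae : ∀ᵐ ω ∂P, ω ∈ E := by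
      have : P Eᶜ = 0 := by
        rw [measure_compl hEmeas (measure_ne_top P E), hE1]
        simp
      rw [ae_iff]; exact this
    filter_upwards [hXsum, hfixIter, hEae] with ω h1 h2 h3
    by_contra hXne
    have h3' : ∃ᶠ n in atTop, T^[n] ω ∈ s := (hEmem ω).mp h3
    -- partial sums telescope
    have hS : Tendsto (fun N : ℕ => ∑ n ∈ Finset.range N,
        (∏ k ∈ Finset.range n, r (T^[k] ω)) * b (T^[n] ω)) atTop (𝓝 (X ω)) :=
      h1.tendsto_sum_nat
    have htel : ∀ N : ℕ, ∑ n ∈ Finset.range N,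
        (∏ k ∈ Finset.range n, r (T^[k] ω)) * b (T^[n] ω)
        = c - c * ∏ k ∈ Finset.range N, r (T^[k] ω) := telescope_sum T b r c ω h2
    rw [show (fun N : ℕ => ∑ n ∈ Finset.range N,
        (∏ k ∈ Finset.range n, r (T^[k] ω)) * b (T^[n] ω))
        = fun N : ℕ => c - c * ∏ k ∈ Finset.range N, r (T^[k] ω) from funext htel] at hS
    rcases eq_or_ne c 0 with rfl | hc0
    · -- c = 0 : partial sums are 0
      apply hXne
      have : Tendsto (fun _ : ℕ => (0:ℝ)) atTop (𝓝 (X ω)) := by simpa using hS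
      exact tendsto_nhds_unique this tendsto_const_nhds
    · -- c ≠ 0
      have hPpos : ∀ N : ℕ, 0 < ∏ k ∈ Finset.range N, r (T^[k] ω) :=
        fun N => Finset.prod_pos fun k _ => hrpos _
      have hcP : Tendsto (fun N : ℕ => c * ∏ k ∈ Finset.range N, r (T^[k] ω)) atTop
          (𝓝 (c - X ω)) := by
        have := hS.const_sub c
        simpa using this
      have hP : Tendsto (fun N : ℕ => ∏ k ∈ Finset.range N, r (T^[k] ω)) atTop
          (𝓝 ((c - X ω) / c)) := by
        have := hcP.div_const c
        have heq : (fun N : ℕ => c * (∏ k ∈ Finset.range N, r (T^[k] ω)) / c)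
            = fun N : ℕ => ∏ k ∈ Finset.range N, r (T^[k] ω) := by
          funext N; field_simp
        rwa [heq] at this
      set L : ℝ := (c - X ω) / c with hL_def
      have hL0 : L ≠ 0 := by
        rw [hL_def]
        exact div_ne_zero (fun h => hXne (by linarith [sub_eq_zero.mp h])) hc0
      have hP1 : Tendsto (fun N : ℕ => ∏ k ∈ Finset.range (N + 1), r (T^[k] ω)) atTop
          (𝓝 L) := hP.comp (tendsto_add_atTop_nat 1)
      have hrT : Tendsto (fun N : ℕ => r (T^[N] ω)) atTop (𝓝 1) := by
        have hdiv := hP1.div hP hL0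
        have heq : (fun N : ℕ => (∏ k ∈ Finset.range (N + 1), r (T^[k] ω))
            / ∏ k ∈ Finset.range N, r (T^[k] ω)) = fun N : ℕ => r (T^[N] ω) := by
          funext N
          rw [Finset.prod_range_succ]
          exact mul_div_cancel_left₀ _ (hPpos N).ne'
        have hdiv2 : Tendsto (fun N : ℕ => (∏ k ∈ Finset.range (N + 1), r (T^[k] ω))
            / ∏ k ∈ Finset.range N, r (T^[k] ω)) atTop (𝓝 (L / L)) := hdiv
        rw [heq] at hdiv2
        simpa [div_self hL0] using hdiv2
      have hlt : Real.exp (-ε) < 1 := by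
        rw [← Real.exp_zero]
        exact Real.exp_lt_exp.mpr (by linarith)
      have hev : ∀ᶠ N in atTop, Real.exp (-ε) < r (T^[N] ω) :=
        hrT.eventually (eventually_gt_nhds hlt)
      obtain ⟨N, hN1, hN2⟩ := (h3'.and_eventually hev).exists
      have : r (T^[N] ω) ≤ Real.exp (-ε) := by
        have := Real.exp_le_exp.mpr (hN1 : Real.log (r (T^[N] ω)) ≤ -ε)
        rwa [Real.exp_log (hrpos _)] at this
      linarith
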